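/- Let Y = (⊕_{n∈ℕ} ℓ₂ⁿ)_{ℓ₁} be the ℓ₁-direct sum of the finite-dimensional Euclidean spaces ℓ₂ⁿ. Then for every constant C > 1 and every bounded linear operator T on Y such that I_Y − T is a compact operator, there exist bounded linear operators U, V on Y with ‖U‖·‖V‖ ≤ C such that U∘T∘V = I_Y. -/

import Mathlib

open scoped ENNReal

set_option maxHeartbeats 1000000
set_option linter.unusedVariables false
set_option linter.unusedSectionVars false
set_option linter.unnecessarySimpa false

noncomputable section Statement8Aux
section
variable {𝕜 : Type*} [RCLike 𝕜]

/-- pad with zeros -/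
def padL {m n : ℕ} (_h : m ≤ n) : EuclideanSpace 𝕜 (Fin m) →ₗ[𝕜] EuclideanSpace 𝕜 (Fin n) where
  toFun v := WithLp.toLp 2 (fun j => if hj : (j : ℕ) < m then v ⟨j, hj⟩ else 0)
  map_add' u v := by ext j; by_cases hj : (j : ℕ) < m <;> simp [hj]
  map_smul' c v := by ext j; by_cases hj : (j : ℕ) < m <;> simp [hj]

def truncL {m n : ℕ} (h : m ≤ n) : EuclideanSpace 𝕜 (Fin n) →ₗ[𝕜] EuclideanSpace 𝕜 (Fin m) where
  toFun v := WithLp.toLp 2 (fun i => v (Fin.castLE h i))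
  map_add' u v := by ext i; simp
  map_smul' c v := by ext i; simp

lemma truncL_padL {m n : ℕ} (h : m ≤ n) (v : EuclideanSpace 𝕜 (Fin m)) :
    truncL h (padL h v) = v := by
  ext i
  simp only [truncL, padL, LinearMap.coe_mk, AddHom.coe_mk]
  rw [dif_pos (by simpa using i.isLt)]
  exact congrArg v (Fin.ext rfl)

lemma norm_truncL_le {m n : ℕ} (h : m ≤ n) (v : EuclideanSpace 𝕜 (Fin n)) :
    ‖truncL h v‖ ≤ ‖v‖ := by
  rw [EuclideanSpace.norm_eq, EuclideanSpace.norm_eq]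
  apply Real.sqrt_le_sqrt
  simp only [truncL, LinearMap.coe_mk, AddHom.coe_mk]
  calc ∑ i : Fin m, ‖v (Fin.castLE h i)‖ ^ 2
      = ∑ j ∈ Finset.univ.map (Fin.castLEEmb h), ‖v j‖ ^ 2 := by
        rw [Finset.sum_map]; rfl
    _ ≤ ∑ j : Fin n, ‖v j‖ ^ 2 := by
        apply Finset.sum_le_sum_of_subset_of_nonneg (Finset.subset_univ _)
        intro i _ _; positivity

lemma norm_padL_le {m n : ℕ} (h : m ≤ n) (v : EuclideanSpace 𝕜 (Fin m)) :
    ‖padL h v‖ ≤ ‖v‖ := by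
  rw [EuclideanSpace.norm_eq, EuclideanSpace.norm_eq]
  apply Real.sqrt_le_sqrt
  have key : ∀ j : Fin n, ‖(padL (𝕜 := 𝕜) h v) j‖ ^ 2
      = if hj : (j : ℕ) < m then ‖v ⟨j, hj⟩‖ ^ 2 else 0 := by
    intro j
    by_cases hj : (j : ℕ) < m <;> simp [padL, hj]
  calc ∑ j : Fin n, ‖(padL (𝕜 := 𝕜) h v) j‖ ^ 2
      = ∑ j ∈ Finset.univ.map (Fin.castLEEmb h), ‖(padL (𝕜 := 𝕜) h v) j‖ ^ 2 := by
        refine (Finset.sum_subset (Finset.subset_univ _) ?_).symm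
        intro j _ hj
        rw [key j, dif_neg]
        intro hjm
        refine hj ?_
        simp only [Finset.mem_map, Finset.mem_univ, true_and]
        exact ⟨⟨(j : ℕ), hjm⟩, Fin.ext rfl⟩
    _ ≤ ∑ i : Fin m, ‖v i‖ ^ 2 := by
        rw [Finset.sum_map]
        apply Finset.sum_le_sum
        intro i _
        have : ((Fin.castLEEmb h) i : ℕ) < m := by simpa using i.isLt
        rw [key, dif_pos this]
        exact le_of_eq (congrArg (fun z => ‖z‖ ^ 2) (congrArg v (Fin.ext rfl)))
end

section generic
variable {E : ℕ → Type*} [∀ i, NormedAddCommGroup (E i)]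

lemma lp_one_summable (x : lp E 1) : Summable fun n => ‖x n‖ := by
  have := (memℓp_gen_iff (p := 1) (by norm_num)).1 (lp.memℓp x)
  simpa using this

lemma lp_one_norm (x : lp E 1) : ‖x‖ = ∑' n, ‖x n‖ := by
  rw [lp.norm_eq_tsum_rpow (by norm_num)]
  simp

lemma lp_one_mem {f : ∀ i, E i} (h : Summable fun n => ‖f n‖) : Memℓp f 1 := by
  apply memℓp_gen
  simpa using h
end generic

section mk1
variable {𝕜 : Type*} [RCLike 𝕜]

abbrev Yc (𝕜 : Type*) [RCLike 𝕜] := lp (fun n : ℕ => EuclideanSpace 𝕜 (Fin n)) 1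

/-- generic "coordinatewise" operator on the ℓ¹-sum -/
noncomputable def mk1 (g : ℕ → ℕ)
    (A : ∀ n : ℕ, EuclideanSpace 𝕜 (Fin (g n)) →ₗ[𝕜] EuclideanSpace 𝕜 (Fin n))
    (hsum : ∀ x : Yc 𝕜, Summable fun n => ‖A n (x (g n))‖)
    (hts : ∀ x : Yc 𝕜, ∑' n, ‖A n (x (g n))‖ ≤ ‖x‖) : Yc 𝕜 →L[𝕜] Yc 𝕜 :=
  LinearMap.mkContinuous
    { toFun := fun x => (⟨fun n => A n (x (g n)), lp_one_mem (hsum x)⟩ : Yc 𝕜)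
      map_add' := fun x y => by
        apply lp.ext
        funext n
        simp only [lp.coeFn_add, Pi.add_apply]
        exact map_add _ _ _
      map_smul' := fun c x => by
        apply lp.ext
        funext n
        simp only [lp.coeFn_smul, Pi.smul_apply, RingHom.id_apply]
        exact map_smul _ _ _ } 1
    (fun x => by
      rw [one_mul]
      change ‖(⟨fun n => A n (x (g n)), lp_one_mem (hsum x)⟩ : Yc 𝕜)‖ ≤ ‖x‖
      rw [lp_one_norm]
      exact hts x)

@[simp] lemma mk1_apply (g : ℕ → ℕ)
    (A : ∀ n : ℕ, EuclideanSpace 𝕜 (Fin (g n)) →ₗ[𝕜] EuclideanSpace 𝕜 (Fin n))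
    (hsum hts) (x : Yc 𝕜) (n : ℕ) : (mk1 g A hsum hts x) n = A n (x (g n)) := rfl

lemma mk1_norm_le (g : ℕ → ℕ)
    (A : ∀ n : ℕ, EuclideanSpace 𝕜 (Fin (g n)) →ₗ[𝕜] EuclideanSpace 𝕜 (Fin n))
    (hsum hts) : ‖mk1 (𝕜 := 𝕜) g A hsum hts‖ ≤ 1 :=
  LinearMap.mkContinuous_norm_le _ zero_le_one _

end mk1

section ops
variable {𝕜 : Type*} [RCLike 𝕜]

/-- tail projection -/
def Qop (M : ℕ) : Yc 𝕜 →L[𝕜] Yc 𝕜 :=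
  mk1 id (fun n => if M ≤ n then LinearMap.id else 0)
    (fun x => by
      refine Summable.of_nonneg_of_le (fun n => norm_nonneg _) (fun n => ?_) (lp_one_summable x)
      by_cases h : M ≤ n <;> simp [h])
    (fun x => by
      rw [lp_one_norm]
      refine Summable.tsum_le_tsum (fun n => ?_) ?_ (lp_one_summable x)
      · by_cases h : M ≤ n <;> simp [h]
      · refine Summable.of_nonneg_of_le (fun n => norm_nonneg _) (fun n => ?_) (lp_one_summable x)
        by_cases h : M ≤ n <;> simp [h])

lemma Qop_apply (M : ℕ) (x : Yc 𝕜) (n : ℕ) :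
    (Qop M x) n = if M ≤ n then x n else 0 := by
  rw [show ((Qop (𝕜 := 𝕜) M x) n) = (if M ≤ n then (LinearMap.id : EuclideanSpace 𝕜 (Fin n) →ₗ[𝕜] EuclideanSpace 𝕜 (Fin n)) else 0) (x n) from rfl]
  by_cases h : M ≤ n <;> simp [h]

lemma Qop_norm_le (M : ℕ) : ‖Qop (𝕜 := 𝕜) M‖ ≤ 1 := mk1_norm_le _ _ _ _

/-- left shift with truncation -/
def Rop (M : ℕ) : Yc 𝕜 →L[𝕜] Yc 𝕜 :=
  mk1 (fun n => n + M) (fun n => truncL (Nat.le_add_right n M))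
    (fun x => by
      refine Summable.of_nonneg_of_le (fun n => norm_nonneg _)
        (fun n => norm_truncL_le _ _) ?_
      exact (summable_nat_add_iff M).2 (lp_one_summable x))
    (fun x => by
      rw [lp_one_norm]
      have hsum := lp_one_summable x
      have hshift : Summable fun n => ‖x (n + M)‖ := (summable_nat_add_iff M).2 hsum
      have h1 : ∑' n, ‖truncL (𝕜 := 𝕜) (Nat.le_add_right n M) (x (n + M))‖
          ≤ ∑' n, ‖x (n + M)‖ := by
        refine Summable.tsum_le_tsum (fun n => norm_truncL_le _ _) ?_ hshift
        exact Summable.of_nonneg_of_le (fun n => norm_nonneg _)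
          (fun n => norm_truncL_le _ _) hshift
      have h2 := Summable.sum_add_tsum_nat_add (f := fun n => ‖x n‖) M hsum
      have h3 : (0:ℝ) ≤ ∑ i ∈ Finset.range M, ‖x i‖ :=
        Finset.sum_nonneg fun i _ => norm_nonneg _
      linarith)

lemma Rop_apply (M : ℕ) (x : Yc 𝕜) (n : ℕ) :
    (Rop M x) n = truncL (Nat.le_add_right n M) (x (n + M)) := rfl

lemma Rop_norm_le (M : ℕ) : ‖Rop (𝕜 := 𝕜) M‖ ≤ 1 := mk1_norm_le _ _ _ _

/-- right shift with zero padding -/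
def Jop (M : ℕ) : Yc 𝕜 →L[𝕜] Yc 𝕜 :=
  mk1 (fun n => n - M) (fun n => if h : M ≤ n then padL (Nat.sub_le n M) else 0)
    (fun x => by
      have hh : Summable fun n => (if M ≤ n then ‖x (n - M)‖ else 0) := by
        refine (summable_nat_add_iff (f := fun n => if M ≤ n then ‖x (n - M)‖ else 0) M).1 ?_
        have : (fun n => if M ≤ n + M then ‖x (n + M - M)‖ else 0) = fun n => ‖x n‖ := by
          funext n
          rw [if_pos (Nat.le_add_left M n), Nat.add_sub_cancel]
        rw [this]
        exact lp_one_summable x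
      refine Summable.of_nonneg_of_le (fun n => norm_nonneg _) (fun n => ?_) hh
      by_cases h : M ≤ n <;> simp [h, norm_padL_le])
    (fun x => by
      rw [lp_one_norm]
      have hsum := lp_one_summable x
      have heq : (fun n => if M ≤ n + M then ‖x (n + M - M)‖ else 0) = fun n => ‖x n‖ := by
        funext n
        rw [if_pos (Nat.le_add_left M n), Nat.add_sub_cancel]
      have hh : Summable fun n => (if M ≤ n then ‖x (n - M)‖ else 0) := by
        refine (summable_nat_add_iff (f := fun n => if M ≤ n then ‖x (n - M)‖ else 0) M).1 ?_
        rw [heq]; exact hsum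
      have h1 : ∑' n, ‖(if h : M ≤ n then padL (𝕜 := 𝕜) (Nat.sub_le n M) else 0) (x (n - M))‖
          ≤ ∑' n, (if M ≤ n then ‖x (n - M)‖ else 0) := by
        refine Summable.tsum_le_tsum (fun n => ?_) ?_ hh
        · by_cases h : M ≤ n <;> simp [h, norm_padL_le]
        · refine Summable.of_nonneg_of_le (fun n => norm_nonneg _) (fun n => ?_) hh
          by_cases h : M ≤ n <;> simp [h, norm_padL_le]
      have h2 := Summable.sum_add_tsum_nat_add
        (f := fun n => if M ≤ n then ‖x (n - M)‖ else 0) M hh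
      rw [heq] at h2
      have h3 : ∑ i ∈ Finset.range M, (if M ≤ i then ‖x (i - M)‖ else 0) = 0 := by
        refine Finset.sum_eq_zero fun i hi => ?_
        rw [if_neg]
        exact Nat.not_le.2 (Finset.mem_range.1 hi)
      linarith)

lemma Jop_apply (M : ℕ) (x : Yc 𝕜) (n : ℕ) :
    (Jop M x) n = (if h : M ≤ n then padL (𝕜 := 𝕜) (Nat.sub_le n M) else 0) (x (n - M)) := rfl

lemma Jop_norm_le (M : ℕ) : ‖Jop (𝕜 := 𝕜) M‖ ≤ 1 := mk1_norm_le _ _ _ _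

end ops

section ids
variable {𝕜 : Type*} [RCLike 𝕜]

lemma coord_cast (x : ∀ k : ℕ, EuclideanSpace 𝕜 (Fin k)) {a b : ℕ} (h : a = b) (i : Fin b) :
    x a (Fin.cast h.symm i) = x b i := by subst h; rfl

lemma Rop_comp_Jop (M : ℕ) : (Rop (𝕜 := 𝕜) M) ∘L (Jop M) = ContinuousLinearMap.id 𝕜 (Yc 𝕜) := by
  ext x : 1
  apply lp.ext
  funext n
  rw [ContinuousLinearMap.comp_apply, Rop_apply, Jop_apply, dif_pos (Nat.le_add_left M (n))]
  show truncL (Nat.le_add_right n M) (padL (Nat.sub_le (n + M) M) (x (n + M - M))) = x n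
  ext i
  simp only [truncL, padL, LinearMap.coe_mk, AddHom.coe_mk]
  rw [dif_pos (show ((Fin.castLE (Nat.le_add_right n M) i : Fin (n + M)) : ℕ) < n + M - M by
    have := i.isLt; simp only [Fin.coe_castLE]; omega)]
  exact coord_cast (fun k => x k) (Nat.add_sub_cancel n M) i

lemma Qop_comp_Jop (M : ℕ) : (Qop (𝕜 := 𝕜) M) ∘L (Jop M) = Jop M := by
  ext x : 1
  apply lp.ext
  funext n
  rw [ContinuousLinearMap.comp_apply, Qop_apply]
  by_cases h : M ≤ n
  · rw [if_pos h]
  · rw [if_neg h, Jop_apply, dif_neg h]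
    simp

lemma Qop_eq_sub (M : ℕ) (x : Yc 𝕜) :
    Qop M x = x - ∑ i ∈ Finset.range M, lp.single 1 i (x i) := by
  apply lp.ext
  funext n
  rw [Qop_apply, lp.coeFn_sub, Pi.sub_apply]
  simp only [lp.coeFn_sum, Finset.sum_apply, lp.single_apply, Finset.sum_dite_eq,
    Finset.sum_pi_single, Finset.mem_range]
  by_cases h : M ≤ n
  · rw [if_pos h, if_neg (by omega)]
    simp
  · rw [if_neg h, if_pos (by omega)]
    simp

lemma tendsto_Qop_norm (x : Yc 𝕜) :
    Filter.Tendsto (fun M => ‖Qop (𝕜 := 𝕜) M x‖) Filter.atTop (nhds 0) := by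
  have hfact : Fact ((1 : ℝ≥0∞) ≤ 1) := ⟨le_rfl⟩
  have hs := lp.hasSum_single (p := 1) ENNReal.one_ne_top x
  have h1 : Filter.Tendsto
      (fun M => ∑ i ∈ Finset.range M, lp.single (E := fun n : ℕ => EuclideanSpace 𝕜 (Fin n)) 1 i (x i))
      Filter.atTop (nhds x) := hs.tendsto_sum_nat
  have h2 : Filter.Tendsto (fun M => Qop (𝕜 := 𝕜) M x) Filter.atTop (nhds 0) := by
    have := Filter.Tendsto.sub (tendsto_const_nhds (x := x)) h1
    simpa only [sub_self, ← Qop_eq_sub] using this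
  simpa using h2.norm

end ids
section compact
variable {𝕜 : Type*} [RCLike 𝕜]

lemma norm_Qop_apply_le (M : ℕ) (z : Yc 𝕜) : ‖Qop M z‖ ≤ ‖z‖ := by
  have h := ContinuousLinearMap.le_of_opNorm_le _ (Qop_norm_le (𝕜 := 𝕜) M) z
  rwa [one_mul] at h

lemma exists_tail_small {A : Yc 𝕜 →L[𝕜] Yc 𝕜} (hA : IsCompactOperator ⇑A) {ε : ℝ}
    (hε : 0 < ε) : ∃ M : ℕ, ‖Qop M ∘L A‖ ≤ ε := by
  have hA' : IsCompactOperator ⇑(A.toLinearMap) := hA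
  obtain ⟨S, hScomp, hSsub⟩ := hA'.image_closedBall_subset_compact 1
  obtain ⟨t, -, htfin, htcov⟩ := hScomp.finite_cover_balls (e := ε / 4) (by positivity)
  have hev : ∀ᶠ M in Filter.atTop, ∀ c ∈ t, ‖Qop (𝕜 := 𝕜) M c‖ < ε / 4 := by
    rw [htfin.eventually_all]
    intro c _
    exact (tendsto_Qop_norm c).eventually_lt_const (by positivity)
  obtain ⟨M, hM⟩ := hev.exists
  refine ⟨M, ?_⟩
  refine ContinuousLinearMap.opNorm_le_bound _ hε.le fun x => ?_
  by_cases hx : x = 0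
  · simp [hx]
  · have hxn : (0:ℝ) < ‖x‖ := norm_pos_iff.2 hx
    set c : 𝕜 := ((‖x‖ : ℝ) : 𝕜) with hc
    have hc0 : c ≠ 0 := by
      simp [hc, RCLike.ofReal_ne_zero, hxn.ne']
    set u : Yc 𝕜 := c⁻¹ • x with hu
    have hcn : ‖c‖ = ‖x‖ := by rw [hc, RCLike.norm_ofReal, abs_of_pos hxn]
    have hun : ‖u‖ = 1 := by
      rw [hu, norm_smul, norm_inv, hcn]
      field_simp
    have humem : u ∈ Metric.closedBall (0 : Yc 𝕜) 1 := by
      simp [Metric.mem_closedBall, hun]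
    have hAu : A u ∈ S := hSsub ⟨u, humem, rfl⟩
    obtain ⟨d, hd⟩ := Set.mem_iUnion₂.1 (htcov hAu)
    obtain ⟨hdt, hdball⟩ := hd
    have hQAu : ‖Qop M (A u)‖ < ε / 2 := by
      have h1 : Qop M (A u) = Qop M (A u - d) + Qop M d := by
        rw [← map_add]; congr 1; abel
      have h2 : ‖Qop M (A u - d)‖ ≤ ‖A u - d‖ := norm_Qop_apply_le _ _
      have h3 : ‖A u - d‖ < ε / 4 := by
        rw [← dist_eq_norm]; exact hdball
      have h4 : ‖Qop M d‖ < ε / 4 := hM d hdt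
      have h5 : ‖Qop M (A u)‖ ≤ ‖Qop M (A u - d)‖ + ‖Qop M d‖ := h1 ▸ norm_add_le _ _
      linarith
    have hAx : A x = c • A u := by
      rw [hu, map_smul, smul_smul, mul_inv_cancel₀ hc0, one_smul]
    have heq : ‖(Qop M ∘L A) x‖ = ‖x‖ * ‖Qop M (A u)‖ := by
      rw [ContinuousLinearMap.comp_apply, hAx, map_smul, norm_smul, hcn]
    rw [heq]
    nlinarith
end compact
section main
variable {𝕜 : Type*} [RCLike 𝕜]

lemma Yc_nontrivial : Nontrivial (Yc 𝕜) := by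
  refine ⟨⟨lp.single 1 1 (EuclideanSpace.single (0 : Fin 1) (1:𝕜)), 0, fun h => ?_⟩⟩
  have h1 : (lp.single (E := fun n : ℕ => EuclideanSpace 𝕜 (Fin n)) 1 1
      (EuclideanSpace.single (0 : Fin 1) (1:𝕜))) 1
      = (0 : Yc 𝕜) 1 := by rw [h]
  rw [lp.single_apply_self] at h1
  have h2 : EuclideanSpace.single (0 : Fin 1) (1:𝕜) 0 = (0 : EuclideanSpace 𝕜 (Fin 1)) 0 := by
    rw [h1]; rfl
  rw [EuclideanSpace.single_apply] at h2
  simp at h2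
end main

section thm
variable {𝕜 : Type*} [RCLike 𝕜]

theorem statement8' (C : ℝ) (hC : 1 < C)
    (T : lp (fun n : ℕ => EuclideanSpace 𝕜 (Fin n)) 1 →L[𝕜]
         lp (fun n : ℕ => EuclideanSpace 𝕜 (Fin n)) 1)
    (hT : IsCompactOperator
      ⇑(ContinuousLinearMap.id 𝕜 (lp (fun n : ℕ => EuclideanSpace 𝕜 (Fin n)) 1) - T)) :
    ∃ U V : lp (fun n : ℕ => EuclideanSpace 𝕜 (Fin n)) 1 →L[𝕜]
            lp (fun n : ℕ => EuclideanSpace 𝕜 (Fin n)) 1,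
      ‖U‖ * ‖V‖ ≤ C ∧
        U ∘L T ∘L V = ContinuousLinearMap.id 𝕜 (lp (fun n : ℕ => EuclideanSpace 𝕜 (Fin n)) 1) := by
  haveI : Fact ((1:ℝ≥0∞) ≤ 1) := ⟨le_rfl⟩
  haveI : Nontrivial (Yc 𝕜) := Yc_nontrivial
  have hC0 : (0:ℝ) < C := lt_trans one_pos hC
  have hCinv : (0:ℝ) < C⁻¹ := by positivity
  have hCC : C * C⁻¹ = 1 := mul_inv_cancel₀ hC0.ne'
  have hinv1 : C⁻¹ < 1 := by nlinarith
  have hε : (0:ℝ) < 1 - C⁻¹ := by linarith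
  obtain ⟨M, hM⟩ := exists_tail_small (𝕜 := 𝕜) hT hε
  set K : Yc 𝕜 →L[𝕜] Yc 𝕜 := ContinuousLinearMap.id 𝕜 (Yc 𝕜) - T with hK
  set t : Yc 𝕜 →L[𝕜] Yc 𝕜 := Rop M ∘L ((Qop M ∘L K) ∘L Jop M) with ht_def
  have htnorm : ‖t‖ ≤ 1 - C⁻¹ := by
    have h1 := ContinuousLinearMap.opNorm_comp_le (Rop (𝕜 := 𝕜) M) ((Qop M ∘L K) ∘L Jop M)
    have h2 := ContinuousLinearMap.opNorm_comp_le ((Qop (𝕜 := 𝕜) M) ∘L K) (Jop M)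
    have h3 := Rop_norm_le (𝕜 := 𝕜) M
    have h4 := Jop_norm_le (𝕜 := 𝕜) M
    have h5 : (0:ℝ) ≤ ‖(Qop (𝕜 := 𝕜) M) ∘L K‖ := norm_nonneg _
    have h6 : (0:ℝ) ≤ ‖Jop (𝕜 := 𝕜) M‖ := norm_nonneg _
    have h7 : (0:ℝ) ≤ ‖(Qop (𝕜 := 𝕜) M ∘L K) ∘L Jop M‖ := norm_nonneg _
    nlinarith [hM]
  have htlt : ‖t‖ < 1 := lt_of_le_of_lt htnorm (by linarith)
  set u : (Yc 𝕜 →L[𝕜] Yc 𝕜)ˣ := Units.oneSub t htlt with hu_def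
  have hQJ' : (Qop (𝕜 := 𝕜) M) * (Jop M) = Jop M := Qop_comp_Jop M
  have hRJ' : (Rop (𝕜 := 𝕜) M) * (Jop M) = 1 := Rop_comp_Jop M
  have hexpand : Rop (𝕜 := 𝕜) M * ((Qop M * ((1 : Yc 𝕜 →L[𝕜] Yc 𝕜) - T)) * Jop M)
      = 1 - Rop M * (Qop M * (T * Jop M)) := by
    rw [mul_sub (Qop (𝕜 := 𝕜) M) 1 T, mul_one, sub_mul, mul_sub, hQJ', hRJ',
      mul_assoc (Qop (𝕜 := 𝕜) M) T (Jop M)]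
  have ht' : t = Rop (𝕜 := 𝕜) M * ((Qop M * ((1 : Yc 𝕜 →L[𝕜] Yc 𝕜) - T)) * Jop M) := rfl
  have hW : Rop (𝕜 := 𝕜) M * (Qop M * (T * Jop M)) = (u : Yc 𝕜 →L[𝕜] Yc 𝕜) := by
    have h8 : t = 1 - Rop (𝕜 := 𝕜) M * (Qop M * (T * Jop M)) := by rw [ht', hexpand]
    have h9 : (u : Yc 𝕜 →L[𝕜] Yc 𝕜) = 1 - t := Units.val_oneSub t htlt
    rw [h9, h8, sub_sub_cancel]
  refine ⟨(↑u⁻¹ : Yc 𝕜 →L[𝕜] Yc 𝕜) * (Rop M * Qop M), Jop M, ?_, ?_⟩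
  · -- norm bound
    have hpos2 : (0:ℝ) < 1 - ‖t‖ := by linarith
    have hu_inv : (↑u⁻¹ : Yc 𝕜 →L[𝕜] Yc 𝕜) = ∑' n : ℕ, t ^ n := rfl
    have h6 : ‖(↑u⁻¹ : Yc 𝕜 →L[𝕜] Yc 𝕜)‖ ≤ (1 - ‖t‖)⁻¹ := by
      rw [hu_inv]
      have h := tsum_geometric_le_of_norm_lt_one t htlt
      rw [norm_one] at h
      linarith
    have h7 : (1 - ‖t‖)⁻¹ ≤ C := by
      have hle : C⁻¹ ≤ 1 - ‖t‖ := by linarith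
      have := mul_inv_cancel₀ hpos2.ne'
      nlinarith [inv_nonneg.2 hpos2.le]
    have h8 : ‖(↑u⁻¹ : Yc 𝕜 →L[𝕜] Yc 𝕜) * (Rop M * Qop M)‖
        ≤ ‖(↑u⁻¹ : Yc 𝕜 →L[𝕜] Yc 𝕜)‖ * ‖Rop (𝕜 := 𝕜) M * Qop M‖ := norm_mul_le _ _
    have h9 : ‖Rop (𝕜 := 𝕜) M * Qop M‖ ≤ ‖Rop (𝕜 := 𝕜) M‖ * ‖Qop (𝕜 := 𝕜) M‖ := norm_mul_le _ _
    have h10 := Rop_norm_le (𝕜 := 𝕜) M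
    have h11 := Qop_norm_le (𝕜 := 𝕜) M
    have h12 := Jop_norm_le (𝕜 := 𝕜) M
    have h13 : (0:ℝ) ≤ ‖(↑u⁻¹ : Yc 𝕜 →L[𝕜] Yc 𝕜)‖ := norm_nonneg _
    have h14 : (0:ℝ) ≤ ‖Rop (𝕜 := 𝕜) M * Qop M‖ := norm_nonneg _
    have h15 : (0:ℝ) ≤ ‖Jop (𝕜 := 𝕜) M‖ := norm_nonneg _
    have h16 : (0:ℝ) ≤ ‖Qop (𝕜 := 𝕜) M‖ := norm_nonneg _
    have hRQ : ‖Rop (𝕜 := 𝕜) M * Qop M‖ ≤ 1 := by nlinarith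
    have hU : ‖(↑u⁻¹ : Yc 𝕜 →L[𝕜] Yc 𝕜) * (Rop M * Qop M)‖ ≤ C := by nlinarith
    calc ‖(↑u⁻¹ : Yc 𝕜 →L[𝕜] Yc 𝕜) * (Rop M * Qop M)‖ * ‖Jop (𝕜 := 𝕜) M‖
        ≤ C * 1 := mul_le_mul hU h12 h15 hC0.le
      _ = C := mul_one C
  · -- factorization
    have hmain : ((↑u⁻¹ : Yc 𝕜 →L[𝕜] Yc 𝕜) * (Rop M * Qop M)) * (T * Jop M) = 1 := by
      have : ((↑u⁻¹ : Yc 𝕜 →L[𝕜] Yc 𝕜) * (Rop M * Qop M)) * (T * Jop M)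
          = (↑u⁻¹ : Yc 𝕜 →L[𝕜] Yc 𝕜) * (Rop M * (Qop M * (T * Jop M))) := by
        simp only [mul_assoc]
      rw [this, hW]
      exact u.inv_mul
    exact hmain
end thm
end Statement8Aux

/-- Let `Y = (⊕_{n∈ℕ} ℓ₂ⁿ)_{ℓ₁}`. For every `C > 1` and every bounded
operator `T` on `Y` such that `I_Y − T` is compact, there are bounded operators `U, V` on
`Y` with `‖U‖·‖V‖ ≤ C` such that `U ∘ T ∘ V = I_Y`. -/
theorem statement8 {𝕜 : Type*} [RCLike 𝕜] (C : ℝ) (hC : 1 < C)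
    (T : lp (fun n : ℕ => EuclideanSpace 𝕜 (Fin n)) 1 →L[𝕜]
         lp (fun n : ℕ => EuclideanSpace 𝕜 (Fin n)) 1)
    (hT : IsCompactOperator
      ⇑(ContinuousLinearMap.id 𝕜 (lp (fun n : ℕ => EuclideanSpace 𝕜 (Fin n)) 1) - T)) :
    ∃ U V : lp (fun n : ℕ => EuclideanSpace 𝕜 (Fin n)) 1 →L[𝕜]
            lp (fun n : ℕ => EuclideanSpace 𝕜 (Fin n)) 1,
      ‖U‖ * ‖V‖ ≤ C ∧
        U ∘L T ∘L V = ContinuousLinearMap.id 𝕜 (lp (fun n : ℕ => EuclideanSpace 𝕜 (Fin n)) 1) :=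
  statement8' C hC T hT
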